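/- Let n ≥ 1 and let A₀, …, A_{n−1} be 2×2 complex matrices satisfying A_{k+1}·A_k = 0 for all 0 ≤ k ≤ n−2. Then every entry of the matrix polynomial H(X) = (I − X·A_{n−1})·(I − X·A_{n−2})⋯(I − X·A₀) ∈ M₂(ℂ[X]) has degree at most n/2 when n is even and at most (n+1)/2 when n is odd (i.e. at most ⌈n/2⌉). -/
import Mathlib

open Matrix Polynomial

private lemma entry_deg_one (M : Matrix (Fin 2) (Fin 2) ℂ) :
    ∀ i j : Fin 2,
      ((((1 : Matrix (Fin 2) (Fin 2) ℂ[X]) - (X : ℂ[X]) • M.map C)) i j).degree ≤ 1 := by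
  intro i j
  have : ((1 : Matrix (Fin 2) (Fin 2) ℂ[X]) - (X : ℂ[X]) • M.map C) i j
      = (1 : Matrix (Fin 2) (Fin 2) ℂ[X]) i j - X * C (M i j) := by
    simp [Matrix.sub_apply, Matrix.smul_apply, Matrix.map_apply, smul_eq_mul]
  rw [this]
  refine le_trans (Polynomial.degree_sub_le _ _) (max_le ?_ ?_)
  · rw [Matrix.one_apply]
    split <;> simp
  · refine le_trans (Polynomial.degree_mul_le _ _) ?_
    calc Polynomial.degree (X : ℂ[X]) + (C (M i j)).degree
        ≤ 1 + 0 := add_le_add Polynomial.degree_X_le (Polynomial.degree_C_le)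
      _ = 1 := by norm_num

private lemma entry_mul_deg {M N : Matrix (Fin 2) (Fin 2) ℂ[X]} {da db : WithBot ℕ}
    (hM : ∀ i j, (M i j).degree ≤ da) (hN : ∀ i j, (N i j).degree ≤ db) :
    ∀ i j, ((M * N) i j).degree ≤ da + db := by
  intro i j
  rw [Matrix.mul_apply]
  refine le_trans (Polynomial.degree_sum_le _ _) (Finset.sup_le fun k _ => ?_)
  exact le_trans (Polynomial.degree_mul_le _ _) (add_le_add (hM i k) (hN k j))

private lemma pair_eq (B B' : Matrix (Fin 2) (Fin 2) ℂ) (h : B * B' = 0) :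
    ((1 : Matrix (Fin 2) (Fin 2) ℂ[X]) - (X : ℂ[X]) • B.map C) *
      ((1 : Matrix (Fin 2) (Fin 2) ℂ[X]) - (X : ℂ[X]) • B'.map C)
    = (1 : Matrix (Fin 2) (Fin 2) ℂ[X]) - (X : ℂ[X]) • (B + B').map C := by
  have hm : (B.map C) * (B'.map C) = 0 := by
    rw [← Matrix.map_mul, h]
    simp
  rw [sub_mul, one_mul, mul_sub, mul_one, Matrix.smul_mul, Matrix.mul_smul, hm]
  have hadd : (B + B').map (C : ℂ → ℂ[X]) = B.map C + B'.map C := by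
    ext i j; simp [Matrix.map_apply]
  rw [hadd]
  simp only [smul_zero, sub_zero, smul_add]
  abel

theorem holonomy_degree_bound (n : ℕ) (hn : 1 ≤ n)
    (A : ℕ → Matrix (Fin 2) (Fin 2) ℂ)
    (hA : ∀ k : ℕ, k + 2 ≤ n → A (k + 1) * A k = 0) :
    ∀ i j : Fin 2,
      ((((List.range n).reverse.map
          (fun k => (1 : Matrix (Fin 2) (Fin 2) ℂ[X]) -
            (X : ℂ[X]) • (A k).map C)).prod) i j).degree
        ≤ (((n + 1) / 2 : ℕ) : WithBot ℕ) := by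
  induction n using Nat.strong_induction_on with
  | _ n ih =>
    match n, hn with
    | 1, _ =>
      simp only [List.range_succ, List.range_zero]
      simpa using entry_deg_one (A 0)
    | 2, _ =>
      have h0 : A 1 * A 0 = 0 := hA 0 (by norm_num)
      simp only [List.range_succ, List.range_zero]
      simp only [List.nil_append, List.reverse_append, List.reverse_cons,
        List.reverse_nil, List.nil_append, List.singleton_append, List.map_cons,
        List.map_nil, List.prod_cons, List.prod_nil, mul_one]
      rw [pair_eq _ _ h0]
      simpa using entry_deg_one (A 1 + A 0)
    | (m + 3), _ =>
      have hrange : (List.range (m + 3)).reverse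
          = (m + 2) :: (m + 1) :: (List.range (m + 1)).reverse := by
        simp [List.range_succ]
      rw [hrange]
      simp only [List.map_cons, List.prod_cons]
      rw [← mul_assoc, pair_eq _ _ (hA (m + 1) (by omega))]
      have hQ := ih (m + 1) (by omega) (by omega) (fun k hk => hA k (by omega))
      have := entry_mul_deg (entry_deg_one (A (m + 2) + A (m + 1))) hQ
      intro i j
      refine le_trans (this i j) ?_
      have : (1 : WithBot ℕ) + (((m + 1 + 1) / 2 : ℕ) : WithBot ℕ)
          = (((m + 3 + 1) / 2 : ℕ) : WithBot ℕ) := by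
        rw [show ((1 : WithBot ℕ)) = ((1 : ℕ) : WithBot ℕ) from rfl, ← Nat.cast_add]
        congr 1
        omega
      rw [this]
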